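/- Let X be a vector lattice with X~ separating points of X, and suppose X has the b-property. Then a net x_α in X converges bbuo to x if and only if it converges in order to x. -/

import Mathlib

set_option linter.unusedSectionVars false
set_option maxHeartbeats 1000000

open Filter Set

section ODual

variable (E : Type*) [AddCommGroup E] [Preorder E] [Module ℝ E]

/-- The order (bounded) dual: linear functionals bounded on order intervals. -/
noncomputable def obDual : Submodule ℝ (E →ₗ[ℝ] ℝ) where
  carrier := {f | ∀ w : E, ∃ M : ℝ, ∀ x : E, -w ≤ x → x ≤ w → |f x| ≤ M}
  zero_mem' := fun w => ⟨0, fun x _ _ => by simp⟩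
  add_mem' := fun {f g} hf hg w => by
    obtain ⟨M, hM⟩ := hf w
    obtain ⟨N, hN⟩ := hg w
    refine ⟨M + N, fun x h1 h2 => ?_⟩
    calc |(f + g) x| = |f x + g x| := by simp
    _ ≤ |f x| + |g x| := abs_add_le _ _
    _ ≤ M + N := add_le_add (hM x h1 h2) (hN x h1 h2)
  smul_mem' := fun c f hf => by
    intro w
    obtain ⟨M, hM⟩ := hf w
    refine ⟨|c| * M, fun x h1 h2 => ?_⟩
    calc |(c • f) x| = |c| * |f x| := by simp [abs_mul]
    _ ≤ |c| * M := mul_le_mul_of_nonneg_left (hM x h1 h2) (abs_nonneg c)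

/-- The pointwise-on-positive-elements (pre)order on a space of functionals. -/
instance instSubPre (Y : Submodule ℝ (E →ₗ[ℝ] ℝ)) : Preorder Y where
  le f g := ∀ x : E, 0 ≤ x → (f : E →ₗ[ℝ] ℝ) x ≤ (g : E →ₗ[ℝ] ℝ) x
  le_refl f x _ := le_rfl
  le_trans f g h h1 h2 x hx := (h1 x hx).trans (h2 x hx)

variable {E}

theorem subPre_le_iff {Y : Submodule ℝ (E →ₗ[ℝ] ℝ)} {f g : Y} :
    f ≤ g ↔ ∀ x : E, 0 ≤ x → (f : E →ₗ[ℝ] ℝ) x ≤ (g : E →ₗ[ℝ] ℝ) x := Iff.rfl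

/-- Order convergence of a net to a limit (sandwich form: eventually
`l - d ≤ x_α ≤ l + d` for every `d` in a set directed downward to `0`). -/
def OConvTo {ι : Type*} [Preorder ι] (x : ι → E) (l : E) : Prop :=
  ∃ D : Set E, D.Nonempty ∧ DirectedOn (· ≥ ·) D ∧ IsGLB D 0 ∧
    ∀ d ∈ D, ∃ α₀ : ι, ∀ α, α₀ ≤ α → l - d ≤ x α ∧ x α ≤ l + d

/-- Order continuity of a linear functional: `f(x_α) → 0` whenever `x_α ↓ 0`. -/
def OrdContE (f : E →ₗ[ℝ] ℝ) : Prop :=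
  ∀ D : Set E, D.Nonempty → DirectedOn (· ≥ ·) D → IsGLB D 0 →
    ∀ ε : ℝ, 0 < ε → ∃ d ∈ D, ∀ e ∈ D, e ≤ d → |f e| < ε

end ODual

section VL

variable (X : Type*) [Lattice X] [AddCommGroup X]
  [CovariantClass X X (· + ·) (· ≤ ·)] [Module ℝ X] [PosSMulMono ℝ X]

variable {X} in
/-- Unbounded order convergence: `|x_α - l| ⊓ u →o 0` for every `u ≥ 0`. -/
def uoConvTo {ι : Type*} [Preorder ι] (x : ι → X) (l : X) : Prop :=
  ∀ u : X, 0 ≤ u → OConvTo (fun α => |x α - l| ⊓ u) (0 : X)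

/-- The canonical evaluation of `x ∈ X` on a space `Y` of functionals on `X`. -/
def hatFun (Y : Submodule ℝ (X →ₗ[ℝ] ℝ)) (x : X) : Y →ₗ[ℝ] ℝ where
  toFun f := (f : X →ₗ[ℝ] ℝ) x
  map_add' f g := by simp
  map_smul' c f := by simp

theorem hatFun_mem (Y : Submodule ℝ (X →ₗ[ℝ] ℝ)) (x : X) :
    hatFun X Y x ∈ obDual Y := by
  intro w
  refine ⟨(w : X →ₗ[ℝ] ℝ) (x⁺) + (w : X →ₗ[ℝ] ℝ) (x⁻), fun f h1 h2 => ?_⟩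
  have hp : (0 : X) ≤ x⁺ := posPart_nonneg x
  have hn : (0 : X) ≤ x⁻ := negPart_nonneg x
  have e1 := (subPre_le_iff.mp h1) _ hp
  have e2 := (subPre_le_iff.mp h2) _ hp
  have e3 := (subPre_le_iff.mp h1) _ hn
  have e4 := (subPre_le_iff.mp h2) _ hn
  have c1 : -((w : X →ₗ[ℝ] ℝ) (x⁺)) ≤ (f : X →ₗ[ℝ] ℝ) (x⁺) := by simpa using e1
  have c3 : -((w : X →ₗ[ℝ] ℝ) (x⁻)) ≤ (f : X →ₗ[ℝ] ℝ) (x⁻) := by simpa using e3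
  have key : (f : X →ₗ[ℝ] ℝ) x
      = (f : X →ₗ[ℝ] ℝ) (x⁺) - (f : X →ₗ[ℝ] ℝ) (x⁻) := by
    rw [← map_sub, posPart_sub_negPart]
  show |(f : X →ₗ[ℝ] ℝ) x| ≤ _
  rw [key]
  have a1 : |(f : X →ₗ[ℝ] ℝ) (x⁺)| ≤ (w : X →ₗ[ℝ] ℝ) (x⁺) := abs_le.mpr ⟨c1, e2⟩
  have a2 : |(f : X →ₗ[ℝ] ℝ) (x⁻)| ≤ (w : X →ₗ[ℝ] ℝ) (x⁻) := abs_le.mpr ⟨c3, e4⟩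
  have := abs_sub ((f : X →ₗ[ℝ] ℝ) (x⁺)) ((f : X →ₗ[ℝ] ℝ) (x⁻))
  linarith

/-- The canonical embedding of `X` into the order dual of `Y ⊆ X~`. -/
def hatEl (Y : Submodule ℝ (X →ₗ[ℝ] ℝ)) (x : X) : obDual Y :=
  ⟨hatFun X Y x, hatFun_mem X Y x⟩

/-- `X~` separates the points of `X`. -/
def SepPoints : Prop := ∀ x : X, x ≠ 0 → ∃ f : obDual X, (f : X →ₗ[ℝ] ℝ) x ≠ 0

/-- The order on `X~~` (the instance `instSubPre`, which instance search no longer finds here). -/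
noncomputable instance instBidualPre : Preorder (obDual (obDual X)) :=
  instSubPre (obDual X) (obDual (obDual X))

/-- The canonical image of `X` in `X~~` is a regular sublattice:
`x_α ↓ 0` in `X` implies `x̂_α ↓ 0` in `X~~`. -/
def HatRegular : Prop :=
  ∀ D : Set X, D.Nonempty → DirectedOn (· ≥ ·) D → IsGLB D 0 →
    IsGLB (hatEl X (obDual X) '' D) (0 : obDual ↥(obDual X))

variable {X} in
/-- The net `x̂_α` is eventually order bounded in `X~~`. -/
def HatEvOB {ι : Type*} [Preorder ι] (x : ι → X) : Prop :=
  ∃ (b t : obDual ↥(obDual X)) (α₀ : ι), ∀ α, α₀ ≤ α →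
    b ≤ hatEl X (obDual X) (x α) ∧ hatEl X (obDual X) (x α) ≤ t

variable {X} in
/-- Bidual bounded uo-convergence. -/
def bbuoConvTo {ι : Type*} [Preorder ι] (x : ι → X) (l : X) : Prop :=
  uoConvTo x l ∧ HatEvOB x

/-- `X` has the `b`-property: every subset of `X` whose canonical image is
order bounded in `X~~` is order bounded in `X`. -/
def HasBProp : Prop :=
  ∀ A : Set X,
    (∃ b t : obDual ↥(obDual X), ∀ a ∈ A,
        b ≤ hatEl X (obDual X) a ∧ hatEl X (obDual X) a ≤ t) →
    ∃ b t : X, ∀ a ∈ A, b ≤ a ∧ a ≤ t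

/-- The Archimedean property for a lattice-ordered group. -/
def IsArch : Prop := ∀ x y : X, 0 ≤ x → (∀ n : ℕ, n • x ≤ y) → x = 0

end VL



section Aux

variable {X : Type*} [Lattice X] [AddCommGroup X]
  [CovariantClass X X (· + ·) (· ≤ ·)] [Module ℝ X] [PosSMulMono ℝ X]

theorem hatEl_mono {a b : X} (h : a ≤ b) :
    hatEl X (obDual X) a ≤ hatEl X (obDual X) b := by
  intro f hf
  have h0 : (0 : X) ≤ b - a := by
    have := sub_nonneg.mpr h; exact this
  have hfpos : 0 ≤ (f : X →ₗ[ℝ] ℝ) (b - a) := by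
    have := hf (b - a) h0
    simpa using this
  have : (f : X →ₗ[ℝ] ℝ) a ≤ (f : X →ₗ[ℝ] ℝ) b := by
    have := hfpos
    rw [map_sub] at this
    linarith
  simpa [hatEl, hatFun] using this

theorem my_neg_abs_le (a : X) : -|a| ≤ a :=
  neg_le.mp (by rw [abs]; exact le_sup_right)

theorem my_neg_le_neg {a b : X} (h : a ≤ b) : -b ≤ -a := by
  have := add_le_add_left h (-a + -b)
  simpa [add_comm, add_left_comm, add_assoc] using this

theorem abs_le_of_sandwich {y d : X} (h1 : -d ≤ y) (h2 : y ≤ d) : |y| ≤ d := by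
  rw [abs]
  exact sup_le h2 (neg_le.mp h1)

end Aux

/-- If `X~` separates points and `X` has the `b`-property, then `bbuo`-convergence
agrees with order convergence. -/
theorem statement6 {X : Type u} [Lattice X] [AddCommGroup X]
    [CovariantClass X X (· + ·) (· ≤ ·)] [Module ℝ X] [PosSMulMono ℝ X]
    (harch : IsArch X)
    (hsep : SepPoints X) (hb : HasBProp X)
    {ι : Type v} [Preorder ι] [Nonempty ι] [IsDirected ι (· ≤ ·)]
    (x : ι → X) (l : X) :
    bbuoConvTo x l ↔ OConvTo x l := by
  constructor
  · rintro ⟨huo, bhat, that, α₀, hα₀⟩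
    -- b-property gives eventual order bounds in X
    obtain ⟨b, t, hbt⟩ := hb (x '' {α | α₀ ≤ α})
      ⟨bhat, that, fun a ⟨α, hα, ha⟩ => ha ▸ hα₀ α hα⟩
    have hbd : ∀ α, α₀ ≤ α → b ≤ x α ∧ x α ≤ t := fun α hα =>
      hbt (x α) ⟨α, hα, rfl⟩
    set c : X := |t - l| + |b - l| with hc
    have hc0 : (0 : X) ≤ c := add_nonneg (abs_nonneg _) (abs_nonneg _)
    have habs : ∀ α, α₀ ≤ α → |x α - l| ≤ c := by
      intro α hα
      refine abs_le_of_sandwich ?_ ?_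
      · have h1 : b - l ≤ x α - l := sub_le_sub_right (hbd α hα).1 l
        have h2 : -|b - l| ≤ b - l := my_neg_abs_le _
        have h3 : -c ≤ -|b - l| := by
          simp only [hc, neg_add_rev]
          calc -|b - l| + -|t - l| ≤ -|b - l| + 0 := by
                exact add_le_add_right (neg_nonpos.mpr (abs_nonneg _)) _
            _ = -|b - l| := add_zero _
        exact h3.trans (h2.trans h1)
      · have h1 : x α - l ≤ t - l := sub_le_sub_right (hbd α hα).2 l
        have h2 : t - l ≤ |t - l| := le_abs_self _
        have h3 : |t - l| ≤ c := le_add_of_nonneg_right (abs_nonneg _)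
        exact h1.trans (h2.trans h3)
    obtain ⟨D, hne, hdir, hglb, hD⟩ := huo c hc0
    refine ⟨D, hne, hdir, hglb, fun d hd => ?_⟩
    obtain ⟨α₁, hα₁⟩ := hD d hd
    obtain ⟨α₂, h20, h21⟩ := directed_of (· ≤ ·) α₀ α₁
    refine ⟨α₂, fun α hα => ?_⟩
    have hle : |x α - l| ≤ d := by
      have h1 := (hα₁ α (h21.trans hα)).2
      rw [zero_add] at h1
      have h2 := habs α (h20.trans hα)
      calc |x α - l| = |x α - l| ⊓ c := (inf_eq_left.mpr h2).symm
        _ ≤ d := h1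
    have h3 : -d ≤ x α - l ∧ x α - l ≤ d :=
      ⟨(my_neg_le_neg hle).trans (my_neg_abs_le _), (le_abs_self _).trans hle⟩
    constructor
    · have := h3.1
      have : l + -d ≤ l + (x α - l) := add_le_add_right this l
      simpa [sub_eq_add_neg, add_comm, add_left_comm, add_assoc] using this
    · have := h3.2
      have : l + (x α - l) ≤ l + d := add_le_add_right this l
      simpa using this
  · rintro ⟨D, hne, hdir, hglb, hD⟩
    have hDnn : ∀ d ∈ D, (0 : X) ≤ d := fun d hd => hglb.1 hd
    constructor
    · intro u hu
      refine ⟨D, hne, hdir, hglb, fun d hd => ?_⟩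
      obtain ⟨α₀, hα₀⟩ := hD d hd
      refine ⟨α₀, fun α hα => ?_⟩
      obtain ⟨h1, h2⟩ := hα₀ α hα
      have habs : |x α - l| ≤ d := by
        refine abs_le_of_sandwich ?_ ?_
        · have := sub_le_sub_right h1 l; simpa [sub_sub_cancel_left] using this
        · have := sub_le_sub_right h2 l; simpa [add_sub_cancel_left] using this
      constructor
      · calc (0 : X) - d ≤ 0 := by simpa using hDnn d hd
          _ ≤ |x α - l| ⊓ u := le_inf (abs_nonneg _) hu
      · calc |x α - l| ⊓ u ≤ |x α - l| := inf_le_left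
          _ ≤ d := habs
          _ = 0 + d := (zero_add d).symm
    · obtain ⟨d, hd⟩ := hne
      obtain ⟨α₀, hα₀⟩ := hD d hd
      exact ⟨hatEl X (obDual X) (l - d), hatEl X (obDual X) (l + d), α₀,
        fun α hα => ⟨hatEl_mono (hα₀ α hα).1, hatEl_mono (hα₀ α hα).2⟩⟩
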